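/- arXiv:0901.1821 — 2 statements merged into one kernel-verified Lean document; each statement's English description precedes it below -/
import Mathlib

section
/- The Motzkin form x0^6 - 3 x0^2 x1^2 x2^2 + x1^4 x2^2 + x1^2 x2^4 is not a sum of squares of polynomials. -/
open MvPolynomial

set_option maxHeartbeats 1000000
namespace MotzkinAux

noncomputable def E (a b c : ℕ) : Fin 3 →₀ ℕ :=
  Finsupp.single 0 a + Finsupp.single 1 b + Finsupp.single 2 c

lemma E_apply0 (a b c : ℕ) : E a b c 0 = a := by
  simp [E, Finsupp.single_apply]

lemma E_apply1 (a b c : ℕ) : E a b c 1 = b := by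
  simp [E, Finsupp.single_apply]

lemma E_apply2 (a b c : ℕ) : E a b c 2 = c := by
  simp [E, Finsupp.single_apply]

lemma eq_E_iff (d : Fin 3 →₀ ℕ) (a b c : ℕ) :
    d = E a b c ↔ d 0 = a ∧ d 1 = b ∧ d 2 = c := by
  constructor
  · rintro rfl
    exact ⟨E_apply0 a b c, E_apply1 a b c, E_apply2 a b c⟩
  · rintro ⟨h0, h1, h2⟩
    ext j
    fin_cases j
    · simpa [E_apply0] using h0
    · simpa [E_apply1] using h1
    · simpa [E_apply2] using h2

lemma p_eq : (X 0 ^ 6 - 3 * X 0 ^ 2 * X 1 ^ 2 * X 2 ^ 2 + X 1 ^ 4 * X 2 ^ 2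
      + X 1 ^ 2 * X 2 ^ 4 : MvPolynomial (Fin 3) ℝ) =
    monomial (E 6 0 0) 1 + monomial (E 2 2 2) (-3)
      + monomial (E 0 4 2) 1 + monomial (E 0 2 4) 1 := by
  have h3 : (3 : MvPolynomial (Fin 3) ℝ) = C 3 := rfl
  simp only [E, X_pow_eq_monomial, h3, C_mul_monomial, monomial_mul, mul_one]
  rw [sub_eq_add_neg, ← map_neg]
  simp only [Finsupp.single_zero, add_zero, zero_add]

lemma key {k : ℕ} (q : Fin k → MvPolynomial (Fin 3) ℝ)
    (c1 c2 c3 : ℤ) (hc3 : c3 ≠ 0)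
    {ν : Fin 3 →₀ ℕ} {i0 : Fin k} (hν : ν ∈ (q i0).support) :
    ∃ μ : Fin 3 →₀ ℕ,
      c1 * ν 0 + c2 * ν 1 + c3 * ν 2 ≤ c1 * μ 0 + c2 * μ 1 + c3 * μ 2 ∧
      0 < coeff (μ + μ) (∑ i, q i ^ 2) := by
  set w : (Fin 3 →₀ ℕ) → ℤ := fun m => c1 * m 0 + c2 * m 1 + c3 * m 2 with hwdef
  have hwadd : ∀ a b : Fin 3 →₀ ℕ, w (a + b) = w a + w b := by
    intro a b
    simp only [hwdef, Finsupp.add_apply]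
    push_cast
    ring
  set S : Finset (Fin 3 →₀ ℕ) := Finset.univ.biUnion (fun i => (q i).support) with hSdef
  have hνS : ν ∈ S := Finset.mem_biUnion.2 ⟨i0, Finset.mem_univ _, hν⟩
  obtain ⟨μ0, hμ0S, hmax0⟩ := S.exists_max_image w ⟨ν, hνS⟩
  set S1 : Finset (Fin 3 →₀ ℕ) := S.filter (fun m => w m = w μ0) with hS1def
  obtain ⟨μ1, hμ1S, hmax1⟩ := S1.exists_max_image (fun m => m 0)
    ⟨μ0, Finset.mem_filter.2 ⟨hμ0S, rfl⟩⟩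
  set S2 : Finset (Fin 3 →₀ ℕ) := S1.filter (fun m => m 0 = μ1 0) with hS2def
  obtain ⟨μ, hμS2, hmax2⟩ := S2.exists_max_image (fun m => m 1)
    ⟨μ1, Finset.mem_filter.2 ⟨hμ1S, rfl⟩⟩
  obtain ⟨hμS1, hμ0eq⟩ := Finset.mem_filter.1 hμS2
  obtain ⟨hμS, hμweq⟩ := Finset.mem_filter.1 hμS1
  -- uniqueness: any two support elements summing to μ + μ are both μ
  have huniq : ∀ m1 m2 : Fin 3 →₀ ℕ, m1 ∈ S → m2 ∈ S → m1 + m2 = μ + μ →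
      m1 = μ ∧ m2 = μ := by
    intro m1 m2 hm1 hm2 hsum
    have hw1 : w m1 ≤ w μ0 := hmax0 _ hm1
    have hw2 : w m2 ≤ w μ0 := hmax0 _ hm2
    have hwsum : w m1 + w m2 = w μ0 + w μ0 := by
      rw [← hwadd, hsum, hwadd, hμweq]
    have hw1' : w m1 = w μ0 := by omega
    have hw2' : w m2 = w μ0 := by omega
    have hm1S1 : m1 ∈ S1 := Finset.mem_filter.2 ⟨hm1, hw1'⟩
    have hm2S1 : m2 ∈ S1 := Finset.mem_filter.2 ⟨hm2, hw2'⟩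
    have h01 : m1 0 ≤ μ1 0 := hmax1 _ hm1S1
    have h02 : m2 0 ≤ μ1 0 := hmax1 _ hm2S1
    have hsum0 : m1 0 + m2 0 = μ 0 + μ 0 := by
      have := congrArg (fun f : Fin 3 →₀ ℕ => f 0) hsum
      simpa using this
    have h01' : m1 0 = μ1 0 := by omega
    have h02' : m2 0 = μ1 0 := by omega
    have hm1S2 : m1 ∈ S2 := Finset.mem_filter.2 ⟨hm1S1, h01'⟩
    have hm2S2 : m2 ∈ S2 := Finset.mem_filter.2 ⟨hm2S1, h02'⟩
    have h11 : m1 1 ≤ μ 1 := hmax2 _ hm1S2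
    have h12 : m2 1 ≤ μ 1 := hmax2 _ hm2S2
    have hsum1 : m1 1 + m2 1 = μ 1 + μ 1 := by
      have := congrArg (fun f : Fin 3 →₀ ℕ => f 1) hsum
      simpa using this
    have h11' : m1 1 = μ 1 := by omega
    have h12' : m2 1 = μ 1 := by omega
    have hcoord2 : ∀ m : Fin 3 →₀ ℕ, m ∈ S → w m = w μ0 → m 0 = μ 0 → m 1 = μ 1 →
        m 2 = μ 2 := by
      intro m _ hwm h0 h1
      have : c3 * (m 2 : ℤ) = c3 * (μ 2 : ℤ) := by
        have h' : w m = w μ := by rw [hwm, hμweq]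
        simp only [hwdef] at h'
        rw [h0, h1] at h'
        omega
      have := mul_left_cancel₀ hc3 this
      exact_mod_cast this
    have e1 : m1 = μ := by
      ext j
      fin_cases j
      · show m1 0 = μ 0; omega
      · show m1 1 = μ 1; exact h11'
      · show m1 2 = μ 2; exact hcoord2 m1 hm1 hw1' (by omega) h11'
    have e2 : m2 = μ := by
      ext j
      fin_cases j
      · show m2 0 = μ 0; omega
      · show m2 1 = μ 1; exact h12'
      · show m2 2 = μ 2; exact hcoord2 m2 hm2 hw2' (by omega) h12'
    exact ⟨e1, e2⟩
  refine ⟨μ, ?_, ?_⟩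
  · have := hmax0 _ hνS
    simpa [hwdef, hμweq] using this.trans_eq hμweq.symm
  · have hcoeff : coeff (μ + μ) (∑ i, q i ^ 2) = ∑ i, coeff μ (q i) * coeff μ (q i) := by
      rw [coeff_sum]
      refine Finset.sum_congr rfl fun i _ => ?_
      rw [sq, coeff_mul]
      refine Finset.sum_eq_single_of_mem (μ, μ) (Finset.HasAntidiagonal.mem_antidiagonal.2 rfl) ?_
      intro x hx hne
      by_contra hzero
      have h1 : coeff x.1 (q i) ≠ 0 := fun h => hzero (by simp [h])
      have h2 : coeff x.2 (q i) ≠ 0 := fun h => hzero (by simp [h])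
      have hx1S : x.1 ∈ S := Finset.mem_biUnion.2
        ⟨i, Finset.mem_univ _, mem_support_iff.2 h1⟩
      have hx2S : x.2 ∈ S := Finset.mem_biUnion.2
        ⟨i, Finset.mem_univ _, mem_support_iff.2 h2⟩
      obtain ⟨e1, e2⟩ := huniq x.1 x.2 hx1S hx2S (Finset.HasAntidiagonal.mem_antidiagonal.1 hx)
      exact hne (Prod.ext e1 e2)
    rw [hcoeff]
    obtain ⟨i1, _, hi1⟩ := Finset.mem_biUnion.1 hμS
    refine Finset.sum_pos' (fun i _ => mul_self_nonneg _) ⟨i1, Finset.mem_univ _, ?_⟩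
    exact mul_self_pos.2 (mem_support_iff.1 hi1)

lemma supp_p {d : Fin 3 →₀ ℕ}
    (h : coeff d (X 0 ^ 6 - 3 * X 0 ^ 2 * X 1 ^ 2 * X 2 ^ 2 + X 1 ^ 4 * X 2 ^ 2
        + X 1 ^ 2 * X 2 ^ 4 : MvPolynomial (Fin 3) ℝ) ≠ 0) :
    d = E 6 0 0 ∨ d = E 2 2 2 ∨ d = E 0 4 2 ∨ d = E 0 2 4 := by
  by_contra hcon
  push_neg at hcon
  obtain ⟨h1, h2, h3, h4⟩ := hcon
  rw [p_eq] at h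
  simp [coeff_monomial, (Ne.symm h1), (Ne.symm h2), (Ne.symm h3), (Ne.symm h4)] at h

lemma coeff222 : coeff (E 2 2 2)
    (X 0 ^ 6 - 3 * X 0 ^ 2 * X 1 ^ 2 * X 2 ^ 2 + X 1 ^ 4 * X 2 ^ 2
        + X 1 ^ 2 * X 2 ^ 4 : MvPolynomial (Fin 3) ℝ) = -3 := by
  have h1 : E 6 0 0 ≠ E 2 2 2 := by
    intro h; have := congrArg (fun f : Fin 3 →₀ ℕ => f 0) h
    simp [E_apply0] at this
  have h3 : E 0 4 2 ≠ E 2 2 2 := by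
    intro h; have := congrArg (fun f : Fin 3 →₀ ℕ => f 1) h
    simp [E_apply1] at this
  have h4 : E 0 2 4 ≠ E 2 2 2 := by
    intro h; have := congrArg (fun f : Fin 3 →₀ ℕ => f 2) h
    simp [E_apply2] at this
  rw [p_eq]
  simp [coeff_monomial, h1, h3, h4]

end MotzkinAux

open MotzkinAux

open MvPolynomial in
theorem motzkin_not_sos :
    ¬ ∃ (k : ℕ) (q : Fin k → MvPolynomial (Fin 3) ℝ),
      (X 0 ^ 6 - 3 * X 0 ^ 2 * X 1 ^ 2 * X 2 ^ 2 + X 1 ^ 4 * X 2 ^ 2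
        + X 1 ^ 2 * X 2 ^ 4 : MvPolynomial (Fin 3) ℝ) = ∑ i, (q i) ^ 2 := by
  rintro ⟨k, q, hp⟩
  -- every exponent in the support of any q i is one of four possibilities
  have hT : ∀ (i : Fin k) (ν : Fin 3 →₀ ℕ), ν ∈ (q i).support →
      (ν 0 = 3 ∧ ν 1 = 0 ∧ ν 2 = 0) ∨ (ν 0 = 1 ∧ ν 1 = 1 ∧ ν 2 = 1) ∨
      (ν 0 = 0 ∧ ν 1 = 2 ∧ ν 2 = 1) ∨ (ν 0 = 0 ∧ ν 1 = 1 ∧ ν 2 = 2) := by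
    intro i ν hν
    have step : ∀ c1 c2 c3 : ℤ, c3 ≠ 0 → ∃ x y z : ℕ,
        ((x = 3 ∧ y = 0 ∧ z = 0) ∨ (x = 1 ∧ y = 1 ∧ z = 1) ∨
         (x = 0 ∧ y = 2 ∧ z = 1) ∨ (x = 0 ∧ y = 1 ∧ z = 2)) ∧
        c1 * ν 0 + c2 * ν 1 + c3 * ν 2 ≤ c1 * x + c2 * y + c3 * z := by
      intro c1 c2 c3 hc3
      obtain ⟨μ, hle, hpos⟩ := key q c1 c2 c3 hc3 hν
      rw [← hp] at hpos
      have hd := supp_p hpos.ne'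
      refine ⟨μ 0, μ 1, μ 2, ?_, hle⟩
      have hμ0 : (μ + μ) 0 = μ 0 + μ 0 := Finsupp.add_apply μ μ 0
      have hμ1 : (μ + μ) 1 = μ 1 + μ 1 := Finsupp.add_apply μ μ 1
      have hμ2 : (μ + μ) 2 = μ 2 + μ 2 := Finsupp.add_apply μ μ 2
      rcases hd with h | h | h | h <;> rw [eq_E_iff] at h <;>
        obtain ⟨e0, e1, e2⟩ := h <;> rw [hμ0] at e0 <;> rw [hμ1] at e1 <;>
        rw [hμ2] at e2 <;> omega
    obtain ⟨x1, y1, z1, h1, l1⟩ := step 1 1 1 one_ne_zero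
    obtain ⟨x2, y2, z2, h2, l2⟩ := step (-1) (-1) (-1) (by norm_num)
    obtain ⟨x3, y3, z3, h3, l3⟩ := step 1 2 (-1) (by norm_num)
    obtain ⟨x4, y4, z4, h4, l4⟩ := step 1 (-1) 2 (by norm_num)
    have L1 : (ν 0 : ℤ) + ν 1 + ν 2 ≤ 3 := by rcases h1 with h|h|h|h <;> omega
    have L2 : (3 : ℤ) ≤ (ν 0 : ℤ) + ν 1 + ν 2 := by rcases h2 with h|h|h|h <;> omega
    have L3 : (ν 0 : ℤ) + 2 * ν 1 - ν 2 ≤ 3 := by rcases h3 with h|h|h|h <;> omega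
    have L4 : (ν 0 : ℤ) - ν 1 + 2 * ν 2 ≤ 3 := by rcases h4 with h|h|h|h <;> omega
    omega
  -- hence the coefficient of (2,2,2) in the sum of squares is nonnegative
  have hnn : (0 : ℝ) ≤ coeff (E 2 2 2) (∑ i, q i ^ 2) := by
    rw [coeff_sum]
    refine Finset.sum_nonneg fun i _ => ?_
    rw [sq, coeff_mul]
    refine Finset.sum_nonneg fun x hx => ?_
    rcases eq_or_ne (coeff x.1 (q i)) 0 with h | h
    · simp [h]
    rcases eq_or_ne (coeff x.2 (q i)) 0 with h' | h'
    · simp [h']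
    have t1 := hT i x.1 (mem_support_iff.2 h)
    have t2 := hT i x.2 (mem_support_iff.2 h')
    have hsum := Finset.HasAntidiagonal.mem_antidiagonal.1 hx
    have e0 : x.1 0 + x.2 0 = 2 := by
      have := congrArg (fun f : Fin 3 →₀ ℕ => f 0) hsum
      simpa [E_apply0] using this
    have e1 : x.1 1 + x.2 1 = 2 := by
      have := congrArg (fun f : Fin 3 →₀ ℕ => f 1) hsum
      simpa [E_apply1] using this
    have e2 : x.1 2 + x.2 2 = 2 := by
      have := congrArg (fun f : Fin 3 →₀ ℕ => f 2) hsum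
      simpa [E_apply2] using this
    have hxx : x.1 = x.2 := by
      ext j
      fin_cases j
      · show x.1 0 = x.2 0; omega
      · show x.1 1 = x.2 1; omega
      · show x.1 2 = x.2 2; omega
    rw [hxx]
    exact mul_self_nonneg _
  rw [← hp, coeff222] at hnn
  norm_num at hnn
end

section
/- The sequence y = (1, 1, 1, 1, 2) has a positive semidefinite 3-by-3 Hankel moment matrix M_2(y) = [[1,1,1],[1,1,1],[1,1,2]], yet y is not in the convex hull of the moment curve {(1, t, t^2, t^3, t^4) : t in R}. -/
theorem hankel_psd_but_not_in_moment_curve_hull :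
    (Matrix.of ![![(1:ℝ),1,1],![1,1,1],![1,1,2]]).PosSemidef ∧
    (![(1:ℝ),1,1,1,2] ∉ convexHull ℝ
      {z : Fin 5 → ℝ | ∃ t : ℝ, z = ![1, t, t^2, t^3, t^4]}) := by
  constructor
  · constructor
    · ext i j
      fin_cases i <;> fin_cases j <;> rfl
    · intro x
      have h := sq_nonneg (x 0 + x 1 + x 2)
      have h2 := sq_nonneg (x 2)
      simp [Matrix.mulVec, dotProduct, Fin.sum_univ_succ, Finsupp.sum_fintype]
      nlinarith
  · intro hmem
    rw [convexHull_eq] at hmem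
    obtain ⟨ι, s, w, z, hw, hsum, hz, hcm⟩ := hmem
    rw [Finset.centerMass_eq_of_sum_1 _ _ hsum] at hcm
    have hcoord : ∀ k : Fin 5, ∑ i ∈ s, w i * (z i k) = ![(1:ℝ),1,1,1,2] k := by
      intro k
      rw [← hcm]
      simp [Finset.sum_apply]
    have e1 : ∑ i ∈ s, w i * z i 1 = 1 := by simpa using hcoord 1
    have e2 : ∑ i ∈ s, w i * z i 2 = 1 := by simpa using hcoord 2
    have e4 : ∑ i ∈ s, w i * z i 4 = 2 := by simpa using hcoord 4
    have hA : ∀ i ∈ s, z i 2 = (z i 1)^2 ∧ z i 4 = (z i 1)^4 := by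
      intro i hi
      obtain ⟨c, hc⟩ := hz i hi
      rw [hc]
      constructor <;> simp
    have e2' : ∑ i ∈ s, w i * (z i 1)^2 = 1 := by
      rw [← e2]; exact Finset.sum_congr rfl fun i hi => by rw [(hA i hi).1]
    have e4' : ∑ i ∈ s, w i * (z i 1)^4 = 2 := by
      rw [← e4]; exact Finset.sum_congr rfl fun i hi => by rw [(hA i hi).2]
    have hzero : ∑ i ∈ s, w i * (z i 1 - 1)^2 = 0 := by
      have expand : ∑ i ∈ s, w i * (z i 1 - 1)^2
          = ∑ i ∈ s, (w i * (z i 1)^2 - 2 * (w i * z i 1) + w i) :=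
        Finset.sum_congr rfl fun i _ => by ring
      rw [expand, Finset.sum_add_distrib, Finset.sum_sub_distrib, ← Finset.mul_sum,
        e2', e1, hsum]
      ring
    have heach := (Finset.sum_eq_zero_iff_of_nonneg
      (fun i hi => mul_nonneg (hw i hi) (sq_nonneg _))).mp hzero
    have : ∑ i ∈ s, w i * (z i 1)^4 = 1 := by
      rw [← hsum]
      refine Finset.sum_congr rfl fun i hi => ?_
      rcases mul_eq_zero.mp (heach i hi) with h | h
      · rw [h]; ring
      · have : z i 1 = 1 := by nlinarith [sq_nonneg (z i 1 - 1)]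
        rw [this]; ring
    rw [e4'] at this
    norm_num at this
end
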